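/- For d > 1, there is no map ω : [0,1] → [0,1]^d that is simultaneously continuous, open, and surjective. -/

import Mathlib

open Set

/-- In the cube `[0,1]^d` with `d ≥ 2`, given points `u, w` in the cube and any
point `v` distinct from `u` and `w`, there is a preconnected subset of the cube
containing `u` and `w` but avoiding `v`. -/
lemma stmt_3_geom {d : ℕ} (hd : 1 < d) (u v w : Fin d → ℝ)
    (hu : u ∈ Icc (0 : Fin d → ℝ) 1) (hw : w ∈ Icc (0 : Fin d → ℝ) 1)
    (hvu : v ≠ u) (hvw : v ≠ w) :
    ∃ C : Set (Fin d → ℝ), IsPreconnected C ∧ C ⊆ Icc 0 1 ∧ u ∈ C ∧ w ∈ C ∧ v ∉ C := by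
  by_cases hseg : v ∈ segment ℝ u w
  case neg =>
    exact ⟨segment ℝ u w, (convex_segment u w).isPreconnected,
      (convex_Icc _ _).segment_subset hu hw, left_mem_segment _ _ _,
      right_mem_segment _ _ _, hseg⟩
  case pos =>
    rw [segment_eq_image'] at hseg
    obtain ⟨r, hr01, hv⟩ := hseg
    have hr0 : r ≠ 0 := by
      rintro rfl; simp at hv; exact hvu hv.symm
    -- find a point z of the cube with z - u not a multiple of w - u
    have hi01 : (⟨0, by omega⟩ : Fin d) ≠ ⟨1, by omega⟩ := by
      simp [Fin.ext_iff]
    set i0 : Fin d := ⟨0, by omega⟩ with hi0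
    set i1 : Fin d := ⟨1, by omega⟩ with hi1
    classical
    set e0 : Fin d → ℝ := Pi.single i0 1 with he0
    set e1 : Fin d → ℝ := Pi.single i1 1 with he1
    have hmem0 : (0 : Fin d → ℝ) ∈ Icc (0 : Fin d → ℝ) 1 := by
      constructor <;> intro i <;> simp
    have hmeme0 : e0 ∈ Icc (0 : Fin d → ℝ) 1 := by
      constructor <;> intro i <;> rcases eq_or_ne i i0 with h | h <;>
        simp [he0, h, Pi.single_eq_of_ne]
    have hmeme1 : e1 ∈ Icc (0 : Fin d → ℝ) 1 := by
      constructor <;> intro i <;> rcases eq_or_ne i i1 with h | h <;>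
        simp [he1, h, Pi.single_eq_of_ne]
    have hkey : ∃ z : Fin d → ℝ, z ∈ Icc (0 : Fin d → ℝ) 1 ∧
        ∀ c : ℝ, z - u ≠ c • (w - u) := by
      by_contra h
      push_neg at h
      obtain ⟨a, ha⟩ := h 0 hmem0
      obtain ⟨b, hb⟩ := h e0 hmeme0
      obtain ⟨c, hc⟩ := h e1 hmeme1
      have h1 : e0 = (b - a) • (w - u) := by
        have : e0 = (e0 - u) - ((0 : Fin d → ℝ) - u) := by abel
        rw [this, ha, hb, ← sub_smul]
      have h2 : e1 = (c - a) • (w - u) := by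
        have : e1 = (e1 - u) - ((0 : Fin d → ℝ) - u) := by abel
        rw [this, ha, hc, ← sub_smul]
      have e00 : e0 i0 = 1 := by simp [he0]
      have e01 : e0 i1 = 0 := by simp [he0, Pi.single_eq_of_ne hi01.symm]
      have e10 : e1 i0 = 0 := by simp [he1, Pi.single_eq_of_ne hi01]
      have e11 : e1 i1 = 1 := by simp [he1]
      have hb1 : (1 : ℝ) = (b - a) * (w i0 - u i0) := by
        have := congrFun h1 i0
        simpa [e00] using this
      have hb0 : (0 : ℝ) = (b - a) * (w i1 - u i1) := by
        have := congrFun h1 i1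
        simpa [e01] using this
      have hc0 : (0 : ℝ) = (c - a) * (w i0 - u i0) := by
        have := congrFun h2 i0
        simpa [e10] using this
      have hc1 : (1 : ℝ) = (c - a) * (w i1 - u i1) := by
        have := congrFun h2 i1
        simpa [e11] using this
      have hba : b - a ≠ 0 := by
        intro h; rw [h, zero_mul] at hb1; exact one_ne_zero hb1
      have hca : c - a ≠ 0 := by
        intro h; rw [h, zero_mul] at hc1; exact one_ne_zero hc1
      have hw0 : w i0 - u i0 ≠ 0 := by
        intro h; rw [h, mul_zero] at hb1; exact one_ne_zero hb1
      have : c - a = 0 := by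
        rcases mul_eq_zero.mp hc0.symm with h | h
        · exact h
        · exact absurd h hw0
      exact hca this
    obtain ⟨z, hzmem, hzspan⟩ := hkey
    refine ⟨segment ℝ u z ∪ segment ℝ z w,
      IsPreconnected.union z (right_mem_segment _ _ _) (left_mem_segment _ _ _)
        (convex_segment u z).isPreconnected (convex_segment z w).isPreconnected,
      union_subset ((convex_Icc _ _).segment_subset hu hzmem)
        ((convex_Icc _ _).segment_subset hzmem hw),
      Or.inl (left_mem_segment _ _ _), Or.inr (right_mem_segment _ _ _), ?_⟩
    rintro (hmem | hmem)
    · rw [segment_eq_image'] at hmem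
      obtain ⟨t, ht01, hvz⟩ := hmem
      have ht0 : t ≠ 0 := by
        rintro rfl; simp at hvz; exact hvu hvz.symm
      have h4 : t • (z - u) = r • (w - u) := by
        have h := hvz.trans hv.symm
        exact add_left_cancel h
      have : z - u = (t⁻¹ * r) • (w - u) := by
        rw [mul_smul, ← h4, inv_smul_smul₀ ht0]
      exact hzspan _ this
    · rw [segment_eq_image'] at hmem
      obtain ⟨t, ht01, hvzw⟩ := hmem
      have ht1 : t ≠ 1 := by
        rintro rfl; simp at hvzw; exact hvw hvzw.symm
      have h1t : (1 : ℝ) - t ≠ 0 := sub_ne_zero.mpr (Ne.symm ht1)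
      have h5 : (1 - t) • (z - u) = (r - t) • (w - u) := by
        have h := hvzw.trans hv.symm
        have h' : z + t • (w - z) = u + r • (w - u) := h
        have : (1 - t) • (z - u) - (r - t) • (w - u)
            = (z + t • (w - z)) - (u + r • (w - u)) := by
          simp only [smul_sub, sub_smul, one_smul]
          abel
        rw [h', sub_self] at this
        exact sub_eq_zero.mp this
      have : z - u = ((1 - t)⁻¹ * (r - t)) • (w - u) := by
        rw [mul_smul, ← h5, inv_smul_smul₀ h1t]
      exact hzspan _ this

theorem stmt_3 (d : ℕ) (hd : 1 < d) :
    ¬ ∃ ω : (Set.Icc (0:ℝ) 1) → (Set.Icc (0 : Fin d → ℝ) 1),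
      Continuous ω ∧ IsOpenMap ω ∧ Function.Surjective ω := by
  rintro ⟨ω, hc, ho, hs⟩
  -- f v = minimum of the fiber over v (as a real number)
  set f : (Set.Icc (0 : Fin d → ℝ) 1) → ℝ := fun v => sInf (Subtype.val '' (ω ⁻¹' {v})) with hf_def
  have hAcomp : ∀ v : (Set.Icc (0 : Fin d → ℝ) 1), IsCompact (Subtype.val '' (ω ⁻¹' {v})) := fun v =>
    ((isClosed_singleton.preimage hc).isCompact).image continuous_subtype_val
  have hAne : ∀ v : (Set.Icc (0 : Fin d → ℝ) 1), (Subtype.val '' (ω ⁻¹' {v})).Nonempty := by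
    intro v
    obtain ⟨x, hx⟩ := hs v
    exact ⟨x.val, x, by simp [hx], rfl⟩
  -- the minimum is attained
  have hmem : ∀ v : (Set.Icc (0 : Fin d → ℝ) 1), ∃ x : (Set.Icc (0:ℝ) 1), ω x = v ∧ (x : ℝ) = f v := by
    intro v
    have := (hAcomp v).sInf_mem (hAne v)
    obtain ⟨x, hx1, hx2⟩ := this
    exact ⟨x, by simpa using hx1, hx2⟩
  have hmin : ∀ (v : (Set.Icc (0 : Fin d → ℝ) 1)) (x : (Set.Icc (0:ℝ) 1)), ω x = v → f v ≤ (x : ℝ) := by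
    intro v x hx
    refine csInf_le ?_ ⟨x, by simp [hx], rfl⟩
    exact (hAcomp v).bddBelow
  -- f is injective
  have hinj : Function.Injective f := by
    intro v w hvw
    obtain ⟨x, hx1, hx2⟩ := hmem v
    obtain ⟨y, hy1, hy2⟩ := hmem w
    have : x = y := Subtype.ext (by rw [hx2, hy2, hvw])
    rw [← hx1, ← hy1, this]
  -- f is continuous, using that ω is an open map
  have hfcont : Continuous f := by
    rw [continuous_iff_continuousAt]
    intro v₀
    rw [ContinuousAt, Metric.tendsto_nhds]
    intro ε hε
    obtain ⟨x₀, hx₀, hx₀v⟩ := hmem v₀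
    set t₀ := f v₀
    -- open strip around t₀ and closed part below t₀ - ε
    set U : Set (Set.Icc (0:ℝ) 1) := Subtype.val ⁻¹' (Ioo (t₀ - ε) (t₀ + ε)) with hU
    have hUopen : IsOpen U := isOpen_Ioo.preimage continuous_subtype_val
    set K : Set (Set.Icc (0:ℝ) 1) := Subtype.val ⁻¹' (Iic (t₀ - ε)) with hK
    have hKcomp : IsCompact K :=
      (isClosed_Iic.preimage continuous_subtype_val).isCompact
    have hKclosed : IsClosed (ω '' K) := (hKcomp.image hc).isClosed
    set N : Set (Set.Icc (0 : Fin d → ℝ) 1) := (ω '' U) \ (ω '' K) with hN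
    have hNopen : IsOpen N := (ho U hUopen).sdiff hKclosed
    have hv₀N : v₀ ∈ N := by
      constructor
      · exact ⟨x₀, by simp [hU, hx₀v, hε], hx₀⟩
      · rintro ⟨y, hy, hyv⟩
        have h1 := hmin v₀ y hyv
        have h2 : (y : ℝ) ≤ t₀ - ε := hy
        linarith
    have hNsub : ∀ v ∈ N, dist (f v) t₀ < ε := by
      rintro v ⟨⟨x, hxU, hxv⟩, hnot⟩
      obtain ⟨y, hy1, hy2⟩ := hmem v
      have hyK : (y : ℝ) > t₀ - ε := by
        by_contra h
        exact hnot ⟨y, by simpa [hK] using le_of_not_gt h, hy1⟩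
      have hupper : f v < t₀ + ε := lt_of_le_of_lt (hmin v x hxv) hxU.2
      have hlower : t₀ - ε < f v := by rw [← hy2]; exact hyK
      rw [Real.dist_eq, abs_lt]
      constructor <;> linarith
    exact Filter.eventually_of_mem (hNopen.mem_nhds hv₀N) hNsub
  -- three points of the cube with distinct f-values
  have h0mem : (0 : Fin d → ℝ) ∈ Set.Icc (0 : Fin d → ℝ) 1 := by
    constructor <;> intro i <;> simp
  have h1mem : (1 : Fin d → ℝ) ∈ Set.Icc (0 : Fin d → ℝ) 1 := by
    constructor <;> intro i <;> simp
  have hhmem : (fun _ => (2 : ℝ)⁻¹ : Fin d → ℝ) ∈ Set.Icc (0 : Fin d → ℝ) 1 := by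
    constructor <;> intro i <;> norm_num
  set p0 : (Set.Icc (0 : Fin d → ℝ) 1) := ⟨0, h0mem⟩
  set p1 : (Set.Icc (0 : Fin d → ℝ) 1) := ⟨1, h1mem⟩
  set ph : (Set.Icc (0 : Fin d → ℝ) 1) := ⟨fun _ => (2 : ℝ)⁻¹, hhmem⟩
  have i0lt : (0 : ℕ) < d := by omega
  have hne01 : p0 ≠ p1 := by
    intro h
    have := congrFun (congrArg Subtype.val h) ⟨0, i0lt⟩
    norm_num [p0, p1, ph] at this
  have hne0h : p0 ≠ ph := by
    intro h
    have := congrFun (congrArg Subtype.val h) ⟨0, i0lt⟩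
    norm_num [p0, p1, ph] at this
  have hne1h : p1 ≠ ph := by
    intro h
    have := congrFun (congrArg Subtype.val h) ⟨0, i0lt⟩
    norm_num [p0, p1, ph] at this
  have hab : f p0 ≠ f p1 := fun h => hne01 (hinj h)
  have hbc : f p1 ≠ f ph := fun h => hne1h (hinj h)
  have hac : f p0 ≠ f ph := fun h => hne0h (hinj h)
  obtain ⟨u, v, w, huv, hvw⟩ : ∃ u v w : (Set.Icc (0 : Fin d → ℝ) 1), f u < f v ∧ f v < f w := by
    rcases hab.lt_or_gt with h1 | h1 <;> rcases hbc.lt_or_gt with h2 | h2 <;>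
      rcases hac.lt_or_gt with h3 | h3
    all_goals first
      | exact ⟨p0, p1, ph, h1, h2⟩
      | exact ⟨p0, ph, p1, h3, h2⟩
      | exact ⟨ph, p0, p1, h3, h1⟩
      | exact ⟨p1, p0, ph, h1, h3⟩
      | exact ⟨p1, ph, p0, h2, h3⟩
      | exact ⟨ph, p1, p0, h2, h1⟩
  have hvu : (v : Fin d → ℝ) ≠ u := fun h => huv.ne' (congrArg f (Subtype.ext h))
  have hvw' : (v : Fin d → ℝ) ≠ w := fun h => hvw.ne (congrArg f (Subtype.ext h))
  obtain ⟨C, hCpre, hCsub, huC, hwC, hvC⟩ :=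
    stmt_3_geom hd u.val v.val w.val u.2 w.2 hvu hvw'
  -- transfer to the subtype
  set C' : Set (Set.Icc (0 : Fin d → ℝ) 1) := Subtype.val ⁻¹' C with hC'
  have himg : Subtype.val '' C' = C := by
    rw [hC', Set.image_preimage_eq_inter_range, Subtype.range_coe]
    exact Set.inter_eq_self_of_subset_left hCsub
  have hC'pre : IsPreconnected C' := by
    have h := (Topology.IsInducing.subtypeVal
      (t := Set.Icc (0 : Fin d → ℝ) 1)).isPreconnected_image (s := C')
    rw [himg] at h
    exact h.mp hCpre
  have hfC : IsPreconnected (f '' C') := hC'pre.image f hfcont.continuousOn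
  have huC' : u ∈ C' := huC
  have hwC' : w ∈ C' := hwC
  have hsub : Icc (f u) (f w) ⊆ f '' C' :=
    hfC.Icc_subset ⟨u, huC', rfl⟩ ⟨w, hwC', rfl⟩
  obtain ⟨x, hxC', hxv⟩ := hsub ⟨huv.le, hvw.le⟩
  have : x = v := hinj hxv
  rw [this] at hxC'
  exact hvC hxC'
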